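/- Let C and C̄ form a timelike (1,3)-Bertrand pair in E⁴₂ via the map φ and real constants α, β with c̄(φ(s)) = c(s) + α·n₁(s) + β·n₃(s), and suppose the real constant γ satisfies γ·(α·k₂(s) - β·k₃(s)) - α·k₁(s) = 1 and α·k₂(s) - β·k₃(s) ≠ 0 for all s, with γ² > 1. Then the first curvature k̄₁ of the mate satisfies (φ'(s)·k̄₁(φ(s)))² = ((γ·k₁(s) - k₂(s))² - k₃(s)²)/(γ² - 1) for all s ∈ ℝ. -/

import Mathlib

noncomputable section

/-- The indefinite metric of semi-Euclidean space `E⁴₂`: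
`g(v,w) = -v₁w₁ - v₂w₂ + v₃w₃ + v₄w₄`. -/
def g4 (v w : Fin 4 → ℝ) : ℝ :=
  -(v 0 * w 0) - v 1 * w 1 + v 2 * w 2 + v 3 * w 3

/-- The semi-Euclidean norm `‖v‖ = √|g(v,v)|` in `E⁴₂`. -/
def nrm4 (v : Fin 4 → ℝ) : ℝ := Real.sqrt |g4 v v|

/-- A `C^∞`-special timelike Frenet curve in `E⁴₂`: a unit-speed timelike curve
with Frenet frame `t, n₁, n₂, n₃` (with `t, n₁` timelike and `n₂, n₃` spacelike)
and nowhere-vanishing curvatures `k₁, k₂, k₃` satisfying the Frenet equations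
`t' = -k₁·n₁`, `n₁' = k₁·t + k₂·n₂`, `n₂' = k₂·n₁ + k₃·n₃`, `n₃' = -k₃·n₂`. -/
structure TimelikeFrenetE42 where
  c : ℝ → Fin 4 → ℝ
  t : ℝ → Fin 4 → ℝ
  n1 : ℝ → Fin 4 → ℝ
  n2 : ℝ → Fin 4 → ℝ
  n3 : ℝ → Fin 4 → ℝ
  k1 : ℝ → ℝ
  k2 : ℝ → ℝ
  k3 : ℝ → ℝ
  smooth_c : ContDiff ℝ (⊤ : ℕ∞) c
  smooth_t : ContDiff ℝ (⊤ : ℕ∞) t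
  smooth_n1 : ContDiff ℝ (⊤ : ℕ∞) n1
  smooth_n2 : ContDiff ℝ (⊤ : ℕ∞) n2
  smooth_n3 : ContDiff ℝ (⊤ : ℕ∞) n3
  smooth_k1 : ContDiff ℝ (⊤ : ℕ∞) k1
  smooth_k2 : ContDiff ℝ (⊤ : ℕ∞) k2
  smooth_k3 : ContDiff ℝ (⊤ : ℕ∞) k3
  deriv_c : ∀ s, HasDerivAt c (t s) s
  unit_t : ∀ s, g4 (t s) (t s) = -1
  unit_n1 : ∀ s, g4 (n1 s) (n1 s) = -1
  unit_n2 : ∀ s, g4 (n2 s) (n2 s) = 1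
  unit_n3 : ∀ s, g4 (n3 s) (n3 s) = 1
  orth_t_n1 : ∀ s, g4 (t s) (n1 s) = 0
  orth_t_n2 : ∀ s, g4 (t s) (n2 s) = 0
  orth_t_n3 : ∀ s, g4 (t s) (n3 s) = 0
  orth_n1_n2 : ∀ s, g4 (n1 s) (n2 s) = 0
  orth_n1_n3 : ∀ s, g4 (n1 s) (n3 s) = 0
  orth_n2_n3 : ∀ s, g4 (n2 s) (n3 s) = 0
  k1_ne : ∀ s, k1 s ≠ 0
  k2_ne : ∀ s, k2 s ≠ 0
  k3_ne : ∀ s, k3 s ≠ 0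
  frenet_t : ∀ s, HasDerivAt t (-(k1 s) • n1 s) s
  frenet_n1 : ∀ s, HasDerivAt n1 (k1 s • t s + k2 s • n2 s) s
  frenet_n2 : ∀ s, HasDerivAt n2 (k2 s • n1 s + k3 s • n3 s) s
  frenet_n3 : ∀ s, HasDerivAt n3 (-(k3 s) • n2 s) s

lemma g4_add_left (x y z : Fin 4 → ℝ) : g4 (x + y) z = g4 x z + g4 y z := by
  simp [g4, Pi.add_apply]; ring

lemma g4_smul_left (a : ℝ) (x y : Fin 4 → ℝ) : g4 (a • x) y = a * g4 x y := by
  simp [g4, Pi.smul_apply, smul_eq_mul]; ring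

lemma g4_add_right (x y z : Fin 4 → ℝ) : g4 x (y + z) = g4 x y + g4 x z := by
  simp [g4, Pi.add_apply]; ring

lemma g4_smul_right (a : ℝ) (x y : Fin 4 → ℝ) : g4 x (a • y) = a * g4 x y := by
  simp [g4, Pi.smul_apply, smul_eq_mul]; ring

lemma g4_symm (x y : Fin 4 → ℝ) : g4 x y = g4 y x := by
  simp [g4]; ring

/-- For a timelike `(1,3)`-Bertrand pair in `E⁴₂` with constant `α, β` and a constant
`γ` with `γ² > 1` satisfying `γ·(α·k₂ - β·k₃) - α·k₁ = 1` and `α·k₂ - β·k₃ ≠ 0`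
everywhere, the first curvature `k̄₁` of the mate satisfies
`(φ'(s)·k̄₁(φ(s)))² = ((γ·k₁(s) - k₂(s))² - k₃(s)²)/(γ² - 1)` for all `s`. -/
theorem bertrand13_E42_mate_first_curvature_sq
    (C Cb : TimelikeFrenetE42) (φ : ℝ → ℝ) (α β γ : ℝ)
    (hφ : ContDiff ℝ (⊤ : ℕ∞) φ) (hφ' : ∀ s, deriv φ s ≠ 0)
    (hpos : ∀ s, Cb.c (φ s) = C.c s + α • C.n1 s + β • C.n3 s)
    (hspan : ∀ s, Submodule.span ℝ ({Cb.n1 (φ s), Cb.n3 (φ s)} : Set (Fin 4 → ℝ)) =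
      Submodule.span ℝ ({C.n1 s, C.n3 s} : Set (Fin 4 → ℝ)))
    (hγ2 : γ ^ 2 > 1)
    (hne : ∀ s, α * C.k2 s - β * C.k3 s ≠ 0)
    (hγ : ∀ s, γ * (α * C.k2 s - β * C.k3 s) - α * C.k1 s = 1) :
    ∀ s, (deriv φ s * Cb.k1 (φ s)) ^ 2 =
      ((γ * C.k1 s - C.k2 s) ^ 2 - C.k3 s ^ 2) / (γ ^ 2 - 1) := by
  have hφd : Differentiable ℝ φ := hφ.differentiable (by simp)
  have hdφ : ContDiff ℝ (⊤ : ℕ∞) (deriv φ) := (contDiff_infty_iff_deriv.mp hφ).2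
  -- First derivative identity
  have E1 : ∀ u, deriv φ u • Cb.t (φ u)
      = (α * C.k2 u - β * C.k3 u) • (γ • C.t u + C.n2 u) := by
    intro u
    have hL : HasDerivAt (fun v => Cb.c (φ v)) (deriv φ u • Cb.t (φ u)) u :=
      (Cb.deriv_c (φ u)).scomp u (hφd u).hasDerivAt
    have hR : HasDerivAt (fun v => C.c v + α • C.n1 v + β • C.n3 v)
        (C.t u + α • (C.k1 u • C.t u + C.k2 u • C.n2 u) + β • (-(C.k3 u) • C.n2 u)) u :=
      ((C.deriv_c u).add ((C.frenet_n1 u).const_smul α)).add ((C.frenet_n3 u).const_smul β)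
    have hFG : (fun v => Cb.c (φ v)) = fun v => C.c v + α • C.n1 v + β • C.n3 v :=
      funext fun v => hpos v
    rw [hFG] at hL
    rw [hL.unique hR]
    funext i
    simp only [Pi.add_apply, Pi.smul_apply, smul_eq_mul, neg_mul]
    linear_combination (- C.t u i) * hγ u
  intro s
  have hφs : deriv φ s ≠ 0 := hφ' s
  -- Second derivative identity
  have hdd : HasDerivAt (deriv φ) (deriv (deriv φ) s) s :=
    ((hdφ.differentiable (by simp)) s).hasDerivAt
  have htb : HasDerivAt (fun u => Cb.t (φ u))
      (deriv φ s • (-(Cb.k1 (φ s)) • Cb.n1 (φ s))) s :=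
    (Cb.frenet_t (φ s)).scomp s (hφd s).hasDerivAt
  have hL2 : HasDerivAt (fun u => deriv φ u • Cb.t (φ u))
      (deriv φ s • (deriv φ s • (-(Cb.k1 (φ s)) • Cb.n1 (φ s)))
        + deriv (deriv φ) s • Cb.t (φ s)) s :=
    hdd.smul htb
  have hk2' : HasDerivAt (fun u => α * C.k2 u - β * C.k3 u)
      (α * deriv C.k2 s - β * deriv C.k3 s) s :=
    (((C.smooth_k2.differentiable (by simp)) s).hasDerivAt.const_mul α).sub
      (((C.smooth_k3.differentiable (by simp)) s).hasDerivAt.const_mul β)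
  have hvec : HasDerivAt (fun u => γ • C.t u + C.n2 u)
      (γ • (-(C.k1 s) • C.n1 s) + (C.k2 s • C.n1 s + C.k3 s • C.n3 s)) s :=
    ((C.frenet_t s).const_smul γ).add (C.frenet_n2 s)
  have hR2 : HasDerivAt (fun u => (α * C.k2 u - β * C.k3 u) • (γ • C.t u + C.n2 u))
      ((α * C.k2 s - β * C.k3 s) •
          (γ • (-(C.k1 s) • C.n1 s) + (C.k2 s • C.n1 s + C.k3 s • C.n3 s))
        + (α * deriv C.k2 s - β * deriv C.k3 s) • (γ • C.t s + C.n2 s)) s :=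
    hk2'.smul hvec
  have hLR : (fun u => deriv φ u • Cb.t (φ u))
      = fun u => (α * C.k2 u - β * C.k3 u) • (γ • C.t u + C.n2 u) := funext E1
  rw [hLR] at hL2
  have D := hL2.unique hR2
  -- inner product facts for the frame of C at s
  have e11 := C.unit_n1 s
  have e33 := C.unit_n3 s
  have e13 := C.orth_n1_n3 s
  have e31 : g4 (C.n3 s) (C.n1 s) = 0 := (g4_symm _ _).trans e13
  have e21 : g4 (C.n2 s) (C.n1 s) = 0 := (g4_symm _ _).trans (C.orth_n1_n2 s)
  have e23 : g4 (C.n2 s) (C.n3 s) = 0 := C.orth_n2_n3 s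
  have et1 := C.orth_t_n1 s
  have et3 := C.orth_t_n3 s
  have et2 := C.orth_t_n2 s
  have ett := C.unit_t s
  have e22 := C.unit_n2 s
  -- `Cb.t (φ s)` is g4-orthogonal to `C.n1 s` and `C.n3 s`
  have ht1 : g4 (Cb.t (φ s)) (C.n1 s) = 0 := by
    have h := congrArg (fun v => g4 v (C.n1 s)) (E1 s)
    simp only [g4_add_left, g4_smul_left] at h
    rw [et1, e21] at h
    have h0 : deriv φ s * g4 (Cb.t (φ s)) (C.n1 s) = 0 := by linear_combination h
    exact (mul_eq_zero.mp h0).resolve_left hφs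
  have ht3 : g4 (Cb.t (φ s)) (C.n3 s) = 0 := by
    have h := congrArg (fun v => g4 v (C.n3 s)) (E1 s)
    simp only [g4_add_left, g4_smul_left] at h
    rw [et3, e23] at h
    have h0 : deriv φ s * g4 (Cb.t (φ s)) (C.n3 s) = 0 := by linear_combination h
    exact (mul_eq_zero.mp h0).resolve_left hφs
  -- `Cb.n1 (φ s)` lies in the plane spanned by `C.n1 s, C.n3 s`
  have hmem : Cb.n1 (φ s) ∈ Submodule.span ℝ ({C.n1 s, C.n3 s} : Set (Fin 4 → ℝ)) := by
    rw [← hspan s]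
    exact Submodule.subset_span (Set.mem_insert _ _)
  obtain ⟨a, b, hab⟩ := Submodule.mem_span_pair.mp hmem
  have hn1n1 : g4 (Cb.n1 (φ s)) (C.n1 s) = -a := by
    rw [← hab]
    simp only [g4_add_left, g4_smul_left]
    rw [e11, e31]; ring
  have hn1n3 : g4 (Cb.n1 (φ s)) (C.n3 s) = b := by
    rw [← hab]
    simp only [g4_add_left, g4_smul_left]
    rw [e13, e33]; ring
  have hunit : a ^ 2 - b ^ 2 = 1 := by
    have h := Cb.unit_n1 (φ s)
    rw [← hab] at h
    simp only [g4_add_left, g4_add_right, g4_smul_left, g4_smul_right] at h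
    rw [e11, e33, e13, e31] at h
    linear_combination -h
  -- squared-speed relation
  have hK2 : (deriv φ s) ^ 2 = (α * C.k2 s - β * C.k3 s) ^ 2 * (γ ^ 2 - 1) := by
    have h := congrArg (fun v => g4 v v) (E1 s)
    simp only [g4_add_left, g4_add_right, g4_smul_left, g4_smul_right] at h
    rw [Cb.unit_t (φ s), ett, e22, et2, (g4_symm _ _).trans et2] at h
    linear_combination -h
  -- project the second-derivative identity onto n1 and n3
  have EqA : (deriv φ s) ^ 2 * Cb.k1 (φ s) * a
      = (α * C.k2 s - β * C.k3 s) * (γ * C.k1 s - C.k2 s) := by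
    have h := congrArg (fun v => g4 v (C.n1 s)) D
    simp only [g4_add_left, g4_smul_left] at h
    rw [ht1, hn1n1, et1, e21, e11, e31] at h
    linear_combination h
  have EqB : (deriv φ s) ^ 2 * Cb.k1 (φ s) * b
      = -((α * C.k2 s - β * C.k3 s) * C.k3 s) := by
    have h := congrArg (fun v => g4 v (C.n3 s)) D
    simp only [g4_add_left, g4_smul_left] at h
    rw [ht3, hn1n3, et3, e23, e13, e33] at h
    linear_combination -h
  -- final algebra
  have hδ : α * C.k2 s - β * C.k3 s ≠ 0 := hne s
  have hγ1 : γ ^ 2 - 1 ≠ 0 := by nlinarith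
  have hQ : (deriv φ s) ^ 2 * (deriv φ s) ^ 2 * (Cb.k1 (φ s)) ^ 2
      = (α * C.k2 s - β * C.k3 s) ^ 2 * ((γ * C.k1 s - C.k2 s) ^ 2 - C.k3 s ^ 2) := by
    linear_combination
      ((deriv φ s) ^ 2 * Cb.k1 (φ s) * a
          + (α * C.k2 s - β * C.k3 s) * (γ * C.k1 s - C.k2 s)) * EqA
        - ((deriv φ s) ^ 2 * Cb.k1 (φ s) * b
          - (α * C.k2 s - β * C.k3 s) * C.k3 s) * EqB
        - (deriv φ s) ^ 2 * (deriv φ s) ^ 2 * (Cb.k1 (φ s)) ^ 2 * hunit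
  rw [eq_div_iff hγ1]
  have key : ((deriv φ s * Cb.k1 (φ s)) ^ 2 * (γ ^ 2 - 1)
      - ((γ * C.k1 s - C.k2 s) ^ 2 - C.k3 s ^ 2)) * (α * C.k2 s - β * C.k3 s) ^ 2 = 0 := by
    linear_combination (-((deriv φ s) ^ 2 * (Cb.k1 (φ s)) ^ 2)) * hK2 + hQ
  have h0 := (mul_eq_zero.mp key).resolve_right (pow_ne_zero 2 hδ)
  linarith
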